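/- Commutator estimate: for |I| = k ≥ 2, ‖[Z^I, f] g(t)‖_{L²(Ω)} ≲ ‖Zf(t)‖_{H^{k−1}_co} · |||g|||_{[k/2]−1,∞,t} + ‖g(t)‖_{H^{k−1}_co} · |||Zf|||_{[(k−1)/2],∞,t}, where [Z^I, f]g = Z^I(fg) − f Z^I g. -/

import Mathlib

open MeasureTheory Set

/-- Composition `Z^w = Z_{w 0} ∘ ⋯ ∘ Z_{w (n-1)}` of abstract first-order derivations
acting on space-time functions, along a word `w`. -/
def Zw {M : ℕ} (Z : Fin M → ((ℝ × (Fin 3 → ℝ)) → ℝ) → ((ℝ × (Fin 3 → ℝ)) → ℝ))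
    {n : ℕ} (w : Fin n → Fin M) (f : (ℝ × (Fin 3 → ℝ)) → ℝ) : (ℝ × (Fin 3 → ℝ)) → ℝ :=
  (List.ofFn w).foldr (fun k h => Z k h) f

/-- Conormal Sobolev norm `‖f(t)‖_{H^m_co} = Σ_{|J|≤m} ‖Z^J f(t)‖_{L²(Ω)}`. -/
noncomputable def HN {M : ℕ}
    (Z : Fin M → ((ℝ × (Fin 3 → ℝ)) → ℝ) → ((ℝ × (Fin 3 → ℝ)) → ℝ))
    (Ω : Set (Fin 3 → ℝ)) (m : ℕ) (f : (ℝ × (Fin 3 → ℝ)) → ℝ) (t : ℝ) : ENNReal :=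
  ∑ n ∈ Finset.range (m + 1), ∑ w : Fin n → Fin M,
    eLpNorm (fun x : Fin 3 → ℝ => Zw Z w f (t, x)) 2 (volume.restrict Ω)

/-- Conormal `L^∞` norm `|||f|||_{m,∞,t} = Σ_{|J|≤m} ‖Z^J f‖_{L^∞([0,t]×Ω)}`. -/
noncomputable def AN {M : ℕ}
    (Z : Fin M → ((ℝ × (Fin 3 → ℝ)) → ℝ) → ((ℝ × (Fin 3 → ℝ)) → ℝ))
    (Ω : Set (Fin 3 → ℝ)) (m : ℕ) (f : (ℝ × (Fin 3 → ℝ)) → ℝ) (t : ℝ) : ENNReal :=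
  ∑ n ∈ Finset.range (m + 1), ∑ w : Fin n → Fin M,
    ⨆ (s : ℝ) (_ : s ∈ Set.Icc (0 : ℝ) t) (x : Fin 3 → ℝ) (_ : x ∈ Ω),
      (‖Zw Z w f (s, x)‖₊ : ENNReal)

namespace Stmt12Aux

variable {M : ℕ} (Z : Fin M → ((ℝ × (Fin 3 → ℝ)) → ℝ) → ((ℝ × (Fin 3 → ℝ)) → ℝ))

/-- Space-time functions. -/
abbrev Fn := (ℝ × (Fin 3 → ℝ)) → ℝ

/-- Iterated derivations along a list. -/
def ZL (l : List (Fin M)) (f : Fn) : Fn := l.foldr (fun k h => Z k h) f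

lemma ZL_append (l₁ l₂ : List (Fin M)) (f : Fn) :
    ZL Z (l₁ ++ l₂) f = ZL Z l₁ (ZL Z l₂ f) := by
  simp [ZL, List.foldr_append]

/-- All "split pairs" occurring in the Leibniz expansion of `Z^l (f g) - f Z^l g`. -/
def allP : List (Fin M) → List (List (Fin M) × List (Fin M))
  | [] => []
  | a :: l => ([a], l) :: ((allP l).map (fun q => (q.1, a :: q.2)) ++
      (allP l).map (fun q => (a :: q.1, q.2)))

lemma allP_spec : ∀ l : List (Fin M), ∀ q ∈ allP l,
    q.1 ≠ [] ∧ q.1.length + q.2.length = l.length := by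
  intro l
  induction l with
  | nil => simp [allP]
  | cons a l ih =>
    intro q hq
    simp only [allP, List.mem_cons, List.mem_append, List.mem_map] at hq
    rcases hq with rfl | ⟨⟨r, hr, rfl⟩ | ⟨r, hr, rfl⟩⟩
    · exact ⟨by simp, by simp [Nat.add_comm]⟩
    · obtain ⟨h1, h2⟩ := ih r hr
      exact ⟨h1, by simp [← h2]; omega⟩
    · obtain ⟨h1, h2⟩ := ih r hr
      exact ⟨by simp, by simp [← h2]; omega⟩

lemma allP_length : ∀ l : List (Fin M), (allP l).length ≤ 3 ^ l.length := by
  intro l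
  induction l with
  | nil => simp [allP]
  | cons a l ih =>
    have h3 : (1:ℕ) ≤ 3 ^ l.length := Nat.one_le_pow _ _ (by norm_num)
    simp only [allP, List.length_cons, List.length_append, List.length_map, pow_succ]
    omega

lemma Z_funsum (hAdd : ∀ k f g, Z k (fun p => f p + g p) = fun p => Z k f p + Z k g p)
    (a : Fin M) {α : Type*} :
    ∀ (L : List α) (F : α → Fn) (h : Fn),
      Z a (fun p => h p + (L.map (fun q => F q p)).sum) =
        fun p => Z a h p + (L.map (fun q => Z a (F q) p)).sum := by
  intro L
  induction L with
  | nil =>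
    intro F h
    simp only [List.map_nil, List.sum_nil, add_zero]
  | cons u L ih =>
    intro F h
    simp only [List.map_cons, List.sum_cons]
    have hA := hAdd a h (fun p => F u p + (L.map (fun q => F q p)).sum)
    beta_reduce at hA
    rw [hA, ih F (F u)]

lemma sum_map_add {α : Type*} (l : List α) (f g : α → ℝ) :
    (l.map (fun x => f x + g x)).sum = (l.map f).sum + (l.map g).sum := by
  induction l with
  | nil => simp
  | cons x l ih => simp [ih]; ring

/-- Leibniz expansion of `Z^l (f g)`. -/
lemma expand (hAdd : ∀ k f g, Z k (fun p => f p + g p) = fun p => Z k f p + Z k g p)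
    (hLeib : ∀ k f g, Z k (fun p => f p * g p) = fun p => f p * Z k g p + g p * Z k f p)
    (f g : Fn) : ∀ l : List (Fin M),
    ZL Z l (fun p => f p * g p) =
      fun p => f p * ZL Z l g p +
        ((allP l).map (fun q => ZL Z q.1 f p * ZL Z q.2 g p)).sum := by
  intro l
  induction l with
  | nil => funext p; simp [allP, ZL]
  | cons a l ih =>
    have h1 : ZL Z (a :: l) (fun p => f p * g p) =
        Z a (ZL Z l fun p => f p * g p) := rfl
    rw [h1, ih]
    have hs := Z_funsum Z hAdd a (allP l)
      (fun q => fun p => ZL Z q.1 f p * ZL Z q.2 g p) (fun p => f p * ZL Z l g p)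
    beta_reduce at hs
    rw [hs, hLeib a f (ZL Z l g)]
    have key : ∀ q : List (Fin M) × List (Fin M),
        Z a (fun p => ZL Z q.1 f p * ZL Z q.2 g p) =
          fun p => ZL Z q.1 f p * ZL Z (a :: q.2) g p +
            ZL Z (a :: q.1) f p * ZL Z q.2 g p := by
      intro q
      rw [hLeib a (ZL Z q.1 f) (ZL Z q.2 g)]
      funext p
      show _ = _ * Z a (ZL Z q.2 g) p + Z a (ZL Z q.1 f) p * _
      ring
    funext p
    simp only [key, sum_map_add, allP, List.map_cons, List.sum_cons,
      List.map_append, List.sum_append, List.map_map, Function.comp_def]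
    show f p * Z a (ZL Z l g) p + ZL Z l g p * Z a f p + _ = _
    have e1 : ZL Z [a] f p = Z a f p := rfl
    have e2 : ∀ r : List (Fin M), ZL Z (a :: r) g p = Z a (ZL Z r g) p := fun _ => rfl
    rw [e1, e2]
    ring

lemma ZL_ofFn {n : ℕ} (w : Fin n → Fin M) (f : Fn) : Zw Z w f = ZL Z (List.ofFn w) f := rfl

lemma ZL_eq_Zw (r : List (Fin M)) (f : Fn) : ZL Z r f = Zw Z r.get f := by
  rw [ZL_ofFn, List.ofFn_get]

lemma le_AN (Ω : Set (Fin 3 → ℝ)) (h : Fn) (m : ℕ) (r : List (Fin M)) (hr : r.length ≤ m)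
    {t : ℝ} (ht : 0 ≤ t) {x : Fin 3 → ℝ} (hx : x ∈ Ω) :
    (‖ZL Z r h (t, x)‖₊ : ENNReal) ≤ AN Z Ω m h t := by
  rw [ZL_eq_Zw]
  have h1 : (‖Zw Z r.get h (t, x)‖₊ : ENNReal) ≤
      ⨆ (s : ℝ) (_ : s ∈ Set.Icc (0 : ℝ) t) (y : Fin 3 → ℝ) (_ : y ∈ Ω),
        (‖Zw Z r.get h (s, y)‖₊ : ENNReal) :=
    le_iSup_of_le t (le_iSup_of_le ⟨ht, le_rfl⟩ (le_iSup_of_le x (le_iSup_of_le hx le_rfl)))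
  refine h1.trans ?_
  unfold AN
  refine le_trans (Finset.single_le_sum (f := fun w : Fin r.length → Fin M =>
      ⨆ (s : ℝ) (_ : s ∈ Set.Icc (0 : ℝ) t) (y : Fin 3 → ℝ) (_ : y ∈ Ω),
        (‖Zw Z w h (s, y)‖₊ : ENNReal)) (fun _ _ => zero_le) (Finset.mem_univ r.get)) ?_
  exact Finset.single_le_sum (f := fun n => ∑ w : Fin n → Fin M,
      ⨆ (s : ℝ) (_ : s ∈ Set.Icc (0 : ℝ) t) (y : Fin 3 → ℝ) (_ : y ∈ Ω),
        (‖Zw Z w h (s, y)‖₊ : ENNReal)) (fun _ _ => zero_le)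
    (Finset.mem_range.mpr (by omega))

lemma le_HN (Ω : Set (Fin 3 → ℝ)) (h : Fn) (m : ℕ) (r : List (Fin M)) (hr : r.length ≤ m)
    (t : ℝ) :
    eLpNorm (fun x : Fin 3 → ℝ => ZL Z r h (t, x)) 2 (volume.restrict Ω) ≤ HN Z Ω m h t := by
  rw [ZL_eq_Zw]
  unfold HN
  refine le_trans (Finset.single_le_sum (f := fun w : Fin r.length → Fin M =>
      eLpNorm (fun x : Fin 3 → ℝ => Zw Z w h (t, x)) 2 (volume.restrict Ω))
      (fun _ _ => zero_le) (Finset.mem_univ r.get)) ?_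
  exact Finset.single_le_sum (f := fun n => ∑ w : Fin n → Fin M,
      eLpNorm (fun x : Fin 3 → ℝ => Zw Z w h (t, x)) 2 (volume.restrict Ω))
    (fun _ _ => zero_le) (Finset.mem_range.mpr (by omega))

lemma ZL_measurable (hMeas : ∀ k f, Measurable f → Measurable (Z k f)) :
    ∀ (l : List (Fin M)) (f : Fn), Measurable f → Measurable (ZL Z l f) := by
  intro l
  induction l with
  | nil => intro f hf; exact hf
  | cons a l ih => intro f hf; exact hMeas a _ (ih f hf)

lemma measurable_listsum {α : Type*} [MeasurableSpace α] :
    ∀ (L : List (α → ℝ)), (∀ u ∈ L, Measurable u) →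
      Measurable (fun x => (L.map (fun u => u x)).sum) := by
  intro L
  induction L with
  | nil => intro _; simp only [List.map_nil, List.sum_nil]; exact measurable_const
  | cons u L ih =>
    intro h
    simp only [List.map_cons, List.sum_cons]
    exact (h u (by simp)).add (ih fun v hv => h v (by simp [hv]))

lemma eLpNorm_listsum {α : Type*} [MeasurableSpace α] (μ : Measure α) :
    ∀ (L : List (α → ℝ)), (∀ u ∈ L, Measurable u) →
      eLpNorm (fun x => (L.map (fun u => u x)).sum) 2 μ ≤
        (L.map (fun u => eLpNorm u 2 μ)).sum := by
  intro L
  induction L with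
  | nil => intro _; simp
  | cons u L ih =>
    intro h
    simp only [List.map_cons, List.sum_cons]
    calc eLpNorm (fun x => u x + (L.map (fun v => v x)).sum) 2 μ
        ≤ eLpNorm u 2 μ + eLpNorm (fun x => (L.map (fun v => v x)).sum) 2 μ :=
          eLpNorm_add_le (h u (by simp)).aestronglyMeasurable
            (measurable_listsum L fun v hv => h v (by simp [hv])).aestronglyMeasurable
            one_le_two
      _ ≤ _ := add_le_add le_rfl (ih fun v hv => h v (by simp [hv]))

lemma mul_bound {α : Type*} [MeasurableSpace α] (μ : Measure α) (S : Set α) (A B : α → ℝ)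
    (hB : Measurable B) (a : ENNReal) (hA : ∀ x ∈ S, (‖A x‖₊ : ENNReal) ≤ a) :
    eLpNorm (fun x => A x * B x) 2 (μ.restrict S) ≤ a * eLpNorm B 2 (μ.restrict S) := by
  rw [eLpNorm_eq_lintegral_rpow_enorm_toReal two_ne_zero ENNReal.ofNat_ne_top,
      eLpNorm_eq_lintegral_rpow_enorm_toReal two_ne_zero ENNReal.ofNat_ne_top]
  simp only [enorm_eq_nnnorm]
  simp only [ENNReal.toReal_ofNat, ENNReal.rpow_two]
  have hmono : (∫⁻ x in S, (‖A x * B x‖₊ : ENNReal) ^ 2 ∂μ) ≤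
      a ^ 2 * ∫⁻ x in S, (‖B x‖₊ : ENNReal) ^ 2 ∂μ := by
    rw [← lintegral_const_mul (f := fun x => (‖B x‖₊ : ENNReal) ^ 2) _ (hB.enorm.pow_const 2)]
    apply setLIntegral_mono (measurable_const.mul (hB.enorm.pow_const 2))
    intro x hx
    have h1 : (‖A x * B x‖₊ : ENNReal) = (‖A x‖₊ : ENNReal) * (‖B x‖₊ : ENNReal) := by
      rw [nnnorm_mul]; push_cast; ring
    rw [h1, mul_pow]
    exact mul_le_mul' (pow_le_pow_left' (hA x hx) 2) le_rfl
  calc (∫⁻ x in S, (‖A x * B x‖₊ : ENNReal) ^ 2 ∂μ) ^ (1 / (2:ℝ))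
      ≤ (a ^ 2 * ∫⁻ x in S, (‖B x‖₊ : ENNReal) ^ 2 ∂μ) ^ (1 / (2:ℝ)) :=
        ENNReal.rpow_le_rpow hmono (by norm_num)
    _ = a * (∫⁻ x in S, (‖B x‖₊ : ENNReal) ^ 2 ∂μ) ^ (1 / (2:ℝ)) := by
        rw [ENNReal.mul_rpow_of_nonneg _ _ (by norm_num : (0:ℝ) ≤ 1/2)]
        congr 1
        rw [← ENNReal.rpow_natCast a 2, ← ENNReal.rpow_mul]
        norm_num

end Stmt12Aux

open Stmt12Aux in
/-- Commutator estimate: for `|I| = k ≥ 2`,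
`‖[Z^I, f] g(t)‖_{L²(Ω)} ≲ ‖Zf(t)‖_{H^{k−1}_co} |||g|||_{⌊k/2⌋−1,∞,t}
  + ‖g(t)‖_{H^{k−1}_co} |||Zf|||_{⌊(k−1)/2⌋,∞,t}`,
where `[Z^I, f] g = Z^I(fg) − f Z^I g` and `‖Zf‖` sums over the first derivatives `Z_j f`. -/
theorem stmt12 {M : ℕ} (Ω : Set (Fin 3 → ℝ))
    (Z : Fin M → ((ℝ × (Fin 3 → ℝ)) → ℝ) → ((ℝ × (Fin 3 → ℝ)) → ℝ))
    (hAdd : ∀ k f g, Z k (fun p => f p + g p) = fun p => Z k f p + Z k g p)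
    (hLeib : ∀ k f g, Z k (fun p => f p * g p) = fun p => f p * Z k g p + g p * Z k f p)
    (hMeas : ∀ k f, Measurable f → Measurable (Z k f))
    (k : ℕ) (hk : 2 ≤ k) :
    ∃ C : ℝ, 0 < C ∧ ∀ (f g : (ℝ × (Fin 3 → ℝ)) → ℝ),
      Measurable f → Measurable g → ∀ t : ℝ, 0 ≤ t → ∀ w : Fin k → Fin M,
        eLpNorm (fun x : Fin 3 → ℝ =>
            Zw Z w (fun p => f p * g p) (t, x) - f (t, x) * Zw Z w g (t, x)) 2
            (volume.restrict Ω)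
          ≤ ENNReal.ofReal C *
              ((∑ j : Fin M, HN Z Ω (k - 1) (Z j f) t) * AN Z Ω (k / 2 - 1) g t
                + HN Z Ω (k - 1) g t * (∑ j : Fin M, AN Z Ω ((k - 1) / 2) (Z j f) t)) := by
  refine ⟨(3:ℝ) ^ k, by positivity, ?_⟩
  intro f g hf hg t ht w
  set R := (∑ j : Fin M, HN Z Ω (k - 1) (Z j f) t) * AN Z Ω (k / 2 - 1) g t
    + HN Z Ω (k - 1) g t * (∑ j : Fin M, AN Z Ω ((k - 1) / 2) (Z j f) t) with hR
  set l := List.ofFn w with hl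
  have hlen : l.length = k := by simp [hl]
  have hZw1 : Zw Z w (fun p => f p * g p) = ZL Z l (fun p => f p * g p) := rfl
  have hZw2 : Zw Z w g = ZL Z l g := rfl
  -- the term list
  set L : List ((Fin 3 → ℝ) → ℝ) := (allP l).map
    (fun q => fun y : Fin 3 → ℝ => ZL Z q.1 f (t, y) * ZL Z q.2 g (t, y)) with hL
  have hcomm : (fun x : Fin 3 → ℝ =>
      Zw Z w (fun p => f p * g p) (t, x) - f (t, x) * Zw Z w g (t, x)) =
      fun x => (L.map (fun u => u x)).sum := by
    funext x
    rw [hZw1, hZw2, expand Z hAdd hLeib f g l]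
    simp only [hL, List.map_map, Function.comp_def]
    exact add_sub_cancel_left _ _
  rw [hcomm]
  -- measurability of the terms
  have hmeasterm : ∀ u ∈ L, Measurable u := by
    intro u hu
    rw [hL] at hu
    simp only [List.mem_map] at hu
    obtain ⟨q, hq, rfl⟩ := hu
    exact ((ZL_measurable Z hMeas q.1 f hf).comp measurable_prodMk_left).mul
      ((ZL_measurable Z hMeas q.2 g hg).comp measurable_prodMk_left)
  -- bound each term by R
  have hterm : ∀ q ∈ allP l,
      eLpNorm (fun y : Fin 3 → ℝ => ZL Z q.1 f (t, y) * ZL Z q.2 g (t, y)) 2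
        (volume.restrict Ω) ≤ R := by
    intro q hq
    obtain ⟨hne, hlenq⟩ := allP_spec l q hq
    rw [hlen] at hlenq
    have hq1 : q.1 = q.1.dropLast ++ [q.1.getLast hne] := (List.dropLast_append_getLast hne).symm
    set u := q.1.dropLast with hu
    set j := q.1.getLast hne with hj
    have hZq1 : ZL Z q.1 f = ZL Z u (Z j f) := by
      rw [hq1, ZL_append]; rfl
    have hul : u.length + 1 + q.2.length = k := by
      rw [hq1] at hlenq
      simp only [List.length_append, List.length_singleton] at hlenq
      omega
    rw [hZq1]
    by_cases hc : q.2.length ≤ k / 2 - 1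
    · -- sup on the g-factor, L² on the f-factor
      have hflip : (fun y : Fin 3 → ℝ => ZL Z u (Z j f) (t, y) * ZL Z q.2 g (t, y)) =
          fun y => ZL Z q.2 g (t, y) * ZL Z u (Z j f) (t, y) := by
        funext y; ring
      rw [hflip]
      have hb := mul_bound volume Ω (fun y : Fin 3 → ℝ => ZL Z q.2 g (t, y))
        (fun y : Fin 3 → ℝ => ZL Z u (Z j f) (t, y))
        ((ZL_measurable Z hMeas u (Z j f) (hMeas j f hf)).comp measurable_prodMk_left)
        (AN Z Ω (k / 2 - 1) g t)
        (fun x hx => le_AN Z Ω g (k / 2 - 1) q.2 hc ht hx)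
      refine hb.trans ?_
      have h2 : eLpNorm (fun y : Fin 3 → ℝ => ZL Z u (Z j f) (t, y)) 2 (volume.restrict Ω)
          ≤ ∑ j' : Fin M, HN Z Ω (k - 1) (Z j' f) t := by
        refine le_trans (le_HN Z Ω (Z j f) (k - 1) u (by omega) t) ?_
        exact Finset.single_le_sum (f := fun j' => HN Z Ω (k - 1) (Z j' f) t)
          (fun _ _ => zero_le) (Finset.mem_univ j)
      calc AN Z Ω (k / 2 - 1) g t *
            eLpNorm (fun y : Fin 3 → ℝ => ZL Z u (Z j f) (t, y)) 2 (volume.restrict Ω)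
          ≤ AN Z Ω (k / 2 - 1) g t * ∑ j' : Fin M, HN Z Ω (k - 1) (Z j' f) t :=
            mul_le_mul_right h2 _
        _ = (∑ j' : Fin M, HN Z Ω (k - 1) (Z j' f) t) * AN Z Ω (k / 2 - 1) g t :=
            mul_comm _ _
        _ ≤ R := le_self_add
    · -- sup on the f-factor, L² on the g-factor
      have hulen : u.length ≤ (k - 1) / 2 := by omega
      have hb := mul_bound volume Ω (fun y : Fin 3 → ℝ => ZL Z u (Z j f) (t, y))
        (fun y : Fin 3 → ℝ => ZL Z q.2 g (t, y))
        ((ZL_measurable Z hMeas q.2 g hg).comp measurable_prodMk_left)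
        (AN Z Ω ((k - 1) / 2) (Z j f) t)
        (fun x hx => le_AN Z Ω (Z j f) ((k - 1) / 2) u hulen ht hx)
      refine hb.trans ?_
      have h2 : eLpNorm (fun y : Fin 3 → ℝ => ZL Z q.2 g (t, y)) 2 (volume.restrict Ω)
          ≤ HN Z Ω (k - 1) g t := le_HN Z Ω g (k - 1) q.2 (by omega) t
      have h3 : AN Z Ω ((k - 1) / 2) (Z j f) t ≤
          ∑ j' : Fin M, AN Z Ω ((k - 1) / 2) (Z j' f) t :=
        Finset.single_le_sum (f := fun j' => AN Z Ω ((k - 1) / 2) (Z j' f) t)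
          (fun _ _ => zero_le) (Finset.mem_univ j)
      calc AN Z Ω ((k - 1) / 2) (Z j f) t *
            eLpNorm (fun y : Fin 3 → ℝ => ZL Z q.2 g (t, y)) 2 (volume.restrict Ω)
          ≤ (∑ j' : Fin M, AN Z Ω ((k - 1) / 2) (Z j' f) t) * HN Z Ω (k - 1) g t :=
            mul_le_mul' h3 h2
        _ = HN Z Ω (k - 1) g t * (∑ j' : Fin M, AN Z Ω ((k - 1) / 2) (Z j' f) t) :=
            mul_comm _ _
        _ ≤ R := le_add_self
  -- put everything together
  calc eLpNorm (fun x => (L.map (fun u => u x)).sum) 2 (volume.restrict Ω)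
      ≤ (L.map (fun u => eLpNorm u 2 (volume.restrict Ω))).sum :=
        eLpNorm_listsum _ L hmeasterm
    _ ≤ (L.map (fun u => eLpNorm u 2 (volume.restrict Ω))).length • R := by
        refine List.sum_le_card_nsmul _ R ?_
        intro x hx
        simp only [hL, List.map_map, List.mem_map, Function.comp_def] at hx
        obtain ⟨q, hq, rfl⟩ := hx
        exact hterm q hq
    _ = ((allP l).length : ENNReal) * R := by
        simp [hL, nsmul_eq_mul]
    _ ≤ ENNReal.ofReal ((3:ℝ) ^ k) * R := by
        refine mul_le_mul_left ?_ R
        have h1 : (allP l).length ≤ 3 ^ k := by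
          have := allP_length l
          rwa [hlen] at this
        have h2 : ENNReal.ofReal ((3:ℝ) ^ k) = ((3 ^ k : ℕ) : ENNReal) := by
          rw [show ((3:ℝ) ^ k) = ((3 ^ k : ℕ) : ℝ) by push_cast; ring, ENNReal.ofReal_natCast]
        rw [h2]
        exact_mod_cast h1
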